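/- Let R be a commutative ring, let σ be a finite set of variables, and let φ be an R-algebra endomorphism of the multivariate polynomial ring R[xₛ : s ∈ σ] such that for every s ∈ σ, every monomial appearing in φ(xₛ) − xₛ has total degree at least 2. Then φ is injective. -/

import Mathlib

open MvPolynomial

namespace Stmt1Aux

variable {R : Type*} [CommRing R] {σ : Type*}

/-- all monomials of `p` have degree at least `n`. -/
def LB (p : MvPolynomial σ R) (n : ℕ) : Prop :=
  ∀ d ∈ p.support, n ≤ d.degree

lemma degree_add (a b : σ →₀ ℕ) : (a + b).degree = a.degree + b.degree := by
  simp [Finsupp.degree_eq_weight_one, map_add]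

lemma LB_mul {p q : MvPolynomial σ R} {n m : ℕ} (hp : LB p n) (hq : LB q m) :
    LB (p * q) (n + m) := by
  classical
  intro d hd
  obtain ⟨a, ha, b, hb, rfl⟩ := Finset.mem_add.mp (MvPolynomial.support_mul p q hd)
  rw [degree_add]
  exact Nat.add_le_add (hp a ha) (hq b hb)

lemma LB_sub_component {p : MvPolynomial σ R} {n : ℕ} (hp : LB p n) :
    LB (p - homogeneousComponent n p) (n + 1) := by
  intro d hd
  have hcoeff : coeff d (p - homogeneousComponent n p) ≠ 0 := by
    simpa using hd
  rw [coeff_sub, coeff_homogeneousComponent] at hcoeff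
  by_cases hdn : d.degree = n
  · simp [hdn] at hcoeff
  · have hdp : d ∈ p.support := by
      simp only [hdn, if_neg, sub_zero] at hcoeff
      simpa [mem_support_iff] using hcoeff
    exact Nat.lt_of_le_of_ne (hp d hdp) (Ne.symm hdn)

lemma component_of_LB_gt {p : MvPolynomial σ R} {n m : ℕ} (hp : LB p n) (hm : m < n) :
    homogeneousComponent m p = 0 := by
  apply homogeneousComponent_eq_zero'
  intro d hd
  exact fun hdm => absurd (hp d hd) (by omega)

lemma component_mul {p q : MvPolynomial σ R} {n m : ℕ} (hp : LB p n) (hq : LB q m) :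
    homogeneousComponent (n + m) (p * q)
      = homogeneousComponent n p * homogeneousComponent m q := by
  set pn := homogeneousComponent n p with hpn
  set qm := homogeneousComponent m q with hqm
  have hp' : LB (p - pn) (n + 1) := LB_sub_component hp
  have hq' : LB (q - qm) (m + 1) := LB_sub_component hq
  have hpnLB : LB pn n := fun d hd => by
    have hcoeff : coeff d pn ≠ 0 := by simpa using hd
    rw [hpn, coeff_homogeneousComponent] at hcoeff
    by_cases hdn : d.degree = n
    · omega
    · simp [hdn] at hcoeff
  have hqmLB : LB qm m := fun d hd => by
    have hcoeff : coeff d qm ≠ 0 := by simpa using hd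
    rw [hqm, coeff_homogeneousComponent] at hcoeff
    by_cases hdm : d.degree = m
    · omega
    · simp [hdm] at hcoeff
  have key : p * q = pn * qm + (pn * (q - qm) + (p - pn) * q) := by ring
  have h1 : homogeneousComponent (n + m) (pn * (q - qm)) = 0 :=
    component_of_LB_gt (LB_mul hpnLB hq') (by omega)
  have h2 : homogeneousComponent (n + m) ((p - pn) * q) = 0 :=
    component_of_LB_gt (LB_mul hp' hq) (by omega)
  have h3 : homogeneousComponent (n + m) (pn * qm) = pn * qm := by
    have := ((homogeneousComponent_isHomogeneous n p).mul
      (homogeneousComponent_isHomogeneous m q))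
    rw [homogeneousComponent_of_mem this, if_pos rfl]
  rw [key, map_add, map_add, h1, h2, h3, add_zero, add_zero]

end Stmt1Aux

namespace Stmt1Aux

variable {R : Type*} [CommRing R] {σ : Type*}

lemma degree_single (a : σ) (b : ℕ) : (Finsupp.single a b).degree = b := by
  classical
  by_cases hb : b = 0
  · simp [Finsupp.degree, hb]
  · exact Finsupp.degree_single a b

variable (φ : MvPolynomial σ R →ₐ[R] MvPolynomial σ R)
variable (h : ∀ s : σ, ∀ d ∈ (φ (X s) - X s).support, 2 ≤ d.sum fun _ e => e)

include h in
lemma LB_X (s : σ) : LB (φ (X s)) 1 ∧ homogeneousComponent 1 (φ (X s)) = X s := by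
  classical
  have hr : LB (φ (X s) - X s) 2 := fun d hd => h s d hd
  constructor
  · intro d hd
    have : d ∈ (X s + (φ (X s) - X s) : MvPolynomial σ R).support := by
      simpa using hd
    rcases Finset.mem_union.mp (MvPolynomial.support_add this) with h1 | h1
    · have hx := mem_support_iff.mp h1
      rw [coeff_X'] at hx
      by_cases hds : Finsupp.single s 1 = d
      · subst hds; rw [degree_single]
      · simp [hds] at hx
    · exact le_trans (by norm_num) (hr d h1)
  · have : φ (X s) = X s + (φ (X s) - X s) := by ring
    rw [this, map_add, component_of_LB_gt hr (by omega), add_zero,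
      homogeneousComponent_of_mem (((mem_homogeneousSubmodule _ _).mpr (isHomogeneous_X R s))), if_pos rfl]

include h in
lemma LB_Xpow (s : σ) (b : ℕ) : LB (φ (X s) ^ b) b ∧
    homogeneousComponent b (φ (X s) ^ b) = X s ^ b := by
  induction b with
  | zero =>
      refine ⟨fun d hd => Nat.zero_le _, ?_⟩
      simp only [pow_zero]
      rw [homogeneousComponent_of_mem ((mem_homogeneousSubmodule _ _).mpr (isHomogeneous_one σ R)), if_pos rfl]
  | succ n ih =>
      obtain ⟨hLB, hC⟩ := ih
      obtain ⟨hX, hXC⟩ := LB_X φ h s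
      constructor
      · rw [pow_succ]
        exact LB_mul hLB hX
      · rw [pow_succ, component_mul hLB hX, hC, hXC, ← pow_succ]

include h in
lemma LB_monomial (d : σ →₀ ℕ) : LB (φ (monomial d 1)) d.degree ∧
    homogeneousComponent d.degree (φ (monomial d 1)) = monomial d 1 := by
  classical
  induction d using Finsupp.induction₂ with
  | zero =>
      refine ⟨fun e he => Nat.zero_le _, ?_⟩
      rw [map_zero]
      have h1 : (monomial (0 : σ →₀ ℕ) (1 : R)) = 1 := by simp
      rw [h1, map_one]
      rw [homogeneousComponent_of_mem ((mem_homogeneousSubmodule _ _).mpr (isHomogeneous_one σ R)), if_pos rfl]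
  | add_single a b f ha hb ih =>
      obtain ⟨hLB, hC⟩ := ih
      obtain ⟨hXLB, hXC⟩ := LB_Xpow φ h a b
      have hmono : (monomial (f + Finsupp.single a b) (1 : R))
          = monomial f 1 * X a ^ b := by
        rw [← monomial_add_single]
      have hdeg : (f + Finsupp.single a b).degree = f.degree + b := by
        rw [degree_add, degree_single]
      rw [hmono, map_mul, map_pow, hdeg]
      exact ⟨LB_mul hLB hXLB, by rw [component_mul hLB hXLB, hC, hXC, ← hmono]⟩

end Stmt1Aux

/-- Let `R` be a commutative ring, `σ` a finite set of variables, and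
`φ` an `R`-algebra endomorphism of `R[xₛ : s ∈ σ]` such that every monomial appearing in
`φ(xₛ) - xₛ` has total degree at least `2`, for each `s`. Then `φ` is injective. -/
theorem stmt1 {R : Type*} [CommRing R] {σ : Type*} [Finite σ]
    (φ : MvPolynomial σ R →ₐ[R] MvPolynomial σ R)
    (h : ∀ s : σ, ∀ d ∈ (φ (X s) - X s).support, 2 ≤ d.sum fun _ e => e) :
    Function.Injective φ := by
  classical
  rw [injective_iff_map_eq_zero]
  intro p hp
  by_contra hp0
  have hne : (p.support.image Finsupp.degree).Nonempty :=
    Finset.image_nonempty.mpr (support_nonempty.mpr hp0)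
  set n := (p.support.image Finsupp.degree).min' hne with hn
  have hLBp : Stmt1Aux.LB p n := fun d hd =>
    Finset.min'_le _ _ (Finset.mem_image_of_mem _ hd)
  have hcn : homogeneousComponent n p ≠ 0 := by
    obtain ⟨d, hd, hdeg⟩ :=
      Finset.mem_image.mp ((p.support.image Finsupp.degree).min'_mem hne)
    intro hzero
    have hc := congrArg (coeff d) hzero
    rw [coeff_homogeneousComponent, if_pos hdeg, coeff_zero] at hc
    exact mem_support_iff.mp hd hc
  have key : homogeneousComponent n (φ p) = homogeneousComponent n p := by
    conv_lhs => rw [p.as_sum]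
    rw [map_sum, map_sum, homogeneousComponent_apply, Finset.sum_filter]
    refine Finset.sum_congr rfl fun d hd => ?_
    have hmon : (monomial d (coeff d p)) = C (coeff d p) * monomial d 1 := by
      rw [C_mul_monomial, mul_one]
    have hφC : φ (C (coeff d p)) = C (coeff d p) := by
      rw [← MvPolynomial.algebraMap_eq]; exact φ.commutes _
    rw [hmon, map_mul, hφC, homogeneousComponent_C_mul]
    obtain ⟨hLB, hC⟩ := Stmt1Aux.LB_monomial φ h d
    by_cases hdeg : d.degree = n
    · rw [if_pos hdeg, ← hdeg, hC, C_mul_monomial, mul_one]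
    · have hlt : n < d.degree := lt_of_le_of_ne (hLBp d hd) (Ne.symm hdeg)
      rw [if_neg hdeg, Stmt1Aux.component_of_LB_gt hLB hlt, mul_zero]
  rw [hp, map_zero] at key
  exact hcn key.symm
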